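/- Work in the commutative polynomial ring ℝ[N, 𝐍] in two indeterminates. Fix real numbers μ, e, R with R ≠ 0, and real parameters a, b, c, d. Define Δ := C(e − μ) + C(b)·N + C(c)·N² + C(d)·𝐍 (C denotes the constant embedding ℝ → ℝ[N,𝐍]), Δ̌ := C(e − μ) + C(b)·(N − 2) + C(c)·(N − 2)² + C(d)·(𝐍 − 2·(N − 1)), Δ̂ := C(e − μ) + C(b)·(N + 2) + C(c)·(N + 2)² + C(d)·(𝐍 + 2·(N + 1)), and Δ₀ := C(a) + C(1/R²)·(4·N + N²/4 + 𝐍/2). Then the closure identity (N + 4)·Δ₀ + (Δ̌ − Δ̂)·Δ = 0 holds in ℝ[N, 𝐍] if and only if there exists σ ∈ ({1, −1} : Set ℝ) such that a = 2σ(e − μ)/R, b = 2σ/R, c = σ/(8R), and d = σ/(4R). -/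

import Mathlib

noncomputable section
open MvPolynomial

set_option maxHeartbeats 1600000 in
theorem stmt_18 (μ e R a b c d : ℝ) (hR : R ≠ 0) :
    let Np : MvPolynomial (Fin 2) ℝ := X 0
    let NN : MvPolynomial (Fin 2) ℝ := X 1
    let Cc : ℝ → MvPolynomial (Fin 2) ℝ := fun r => C r
    let Δ : MvPolynomial (Fin 2) ℝ :=
      Cc (e - μ) + Cc b * Np + Cc c * Np ^ 2 + Cc d * NN
    let Δcheck : MvPolynomial (Fin 2) ℝ :=
      Cc (e - μ) + Cc b * (Np - 2) + Cc c * (Np - 2) ^ 2 + Cc d * (NN - 2 * (Np - 1))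
    let Δhat : MvPolynomial (Fin 2) ℝ :=
      Cc (e - μ) + Cc b * (Np + 2) + Cc c * (Np + 2) ^ 2 + Cc d * (NN + 2 * (Np + 1))
    let Δ0 : MvPolynomial (Fin 2) ℝ :=
      Cc a + Cc (1 / R ^ 2) * (4 * Np + Cc (1 / 4) * Np ^ 2 + Cc (1 / 2) * NN)
    ((Np + 4) * Δ0 + (Δcheck - Δhat) * Δ = 0 ↔
      ∃ σ ∈ ({1, -1} : Set ℝ), a = 2 * σ * (e - μ) / R ∧ b = 2 * σ / R ∧
        c = σ / (8 * R) ∧ d = σ / (4 * R)) := by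
  intro Np NN Cc Δ Δcheck Δhat Δ0
  have hR2 : (0:ℝ) < R ^ 2 := by positivity
  simp only [Δ, Δcheck, Δhat, Δ0, Np, NN, Cc]
  constructor
  · intro h
    have hev : ∀ t u : ℝ, (t+4) * (a + 1/R^2 * (4*t + 1/4*t^2 + 1/2*u))
        + (-4*b - 8*c*t - 4*d*t) * ((e-μ) + b*t + c*t^2 + d*u) = 0 := by
      intro t u
      have h2 := congrArg (eval (Fin.cons t (fun _ => u))) h
      simp [eval_add, eval_mul, eval_sub, eval_pow] at h2
      linear_combination h2
    have h00 := hev 0 0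
    have h10 := hev 1 0
    have hm0 := hev (-1) 0
    have h20 := hev 2 0
    have h01 := hev 0 1
    have h11 := hev 1 1
    have hc0 : a - b*(e-μ) = 0 := by linear_combination h00/4
    have hc3 : 1/R^2/4 - 8*c^2 - 4*c*d = 0 := by
      linear_combination (h20 + 3*h00 - 3*h10 - hm0)/6
    have hc4 : 2/R^2 - 4*b*d = 0 := by linear_combination h01 - h00
    have hc5 : 1/R^2/2 - 8*c*d - 4*d^2 = 0 := by
      linear_combination h11 - h10 - h01 + h00
    have hd0 : d ≠ 0 := by
      intro h0
      rw [h0] at hc4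
      have : (0:ℝ) < 2/R^2 := by positivity
      linarith
    have hb8 : b = 8*c + 4*d := by
      have hz : d * (b - (8*c + 4*d)) = 0 := by linear_combination hc5 - hc4/4
      rcases mul_eq_zero.mp hz with h' | h'
      · exact absurd h' hd0
      · linarith [sub_eq_zero.mp h']
    have hbb : b^2 = 4/R^2 := by
      rw [hb8]; linear_combination -8*hc3 - 4*hc5
    have hb0 : b ≠ 0 := by
      intro h0
      rw [h0] at hbb
      have : (0:ℝ) < 4/R^2 := by positivity
      nlinarith
    have h16 : 16*c = b := by
      have hz : b * (16*c - b) = 0 := by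
        linear_combination (8*c - 4*d - b) * hb8 + 4*hc5 - 8*hc3
      rcases mul_eq_zero.mp hz with h' | h'
      · exact absurd h' hb0
      · linarith [sub_eq_zero.mp h']
    have h8 : 8*d = b := by linarith
    refine ⟨b*R/2, ?_, ?_, ?_, ?_, ?_⟩
    · have hσ2 : (b*R/2 - 1) * (b*R/2 + 1) = 0 := by
        have hbb' : b^2 * R^2 = 4 := by
          field_simp at hbb; linarith [hbb]
        linear_combination hbb'/4
      rcases mul_eq_zero.mp hσ2 with h' | h'
      · left; linarith [sub_eq_zero.mp h']
      · right; simp only [Set.mem_singleton_iff]; linarith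
    · field_simp
      linear_combination hc0
    · field_simp
    · field_simp; linear_combination h16
    · field_simp; linear_combination h8
  · rintro ⟨σ, hσ, ha, hb, hc, hd⟩
    simp only [Set.mem_insert_iff, Set.mem_singleton_iff] at hσ
    subst ha hb hc hd
    apply MvPolynomial.funext
    intro x
    rcases hσ with h' | h' <;> subst h' <;>
      simp only [map_add, map_mul, map_sub, map_pow, eval_C, eval_X, map_ofNat, eval_ofNat, map_zero] <;>
      field_simp <;> ring
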